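/- Let n_1 ≤ ⋯ ≤ n_d and let Φ : ℓ_2^{n_1} ⊗_ε ⋯ ⊗_ε ℓ_2^{n_d} → ℓ_2^{n_1⋯n_d} be the natural identification. Then ‖Φ‖ ≥ d^{-3/2} (n_1⋯n_{d-1})^{1/2}. -/

import Mathlib

open Finset Metric MeasureTheory

namespace Stmt14Aux

noncomputable def sgn (b : Bool) : ℝ := if b then 1 else -1

lemma sgn_sq (b : Bool) : sgn b ^ 2 = 1 := by cases b <;> simp [sgn]

lemma sgn_abs (b : Bool) : |sgn b| = 1 := by cases b <;> simp [sgn]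

lemma sgn_pow_even (b : Bool) (j : ℕ) : sgn b ^ (2 * j) = 1 := by
  rw [pow_mul, sgn_sq, one_pow]

/-- `DD m = (2m)!/(2^m m!)`, the real double factorial `(2m-1)!!`. -/
noncomputable def DD (m : ℕ) : ℝ := (2 * m).factorial / (2 ^ m * m.factorial)

lemma DD_pos (m : ℕ) : 0 < DD m := by
  apply div_pos <;> positivity

lemma two_pow_fact_le (j : ℕ) : 2 ^ j * j.factorial ≤ (2 * j).factorial := by
  induction j with
  | zero => simp
  | succ j ih =>
    have : 2 * (j + 1) = (2 * j) + 1 + 1 := by ring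
    rw [this]
    calc 2 ^ (j+1) * (j+1).factorial = (2 * (j+1)) * (2 ^ j * j.factorial) := by
          rw [Nat.factorial_succ]; ring
      _ ≤ (2 * (j+1)) * (2*j).factorial := by
          exact Nat.mul_le_mul_left _ ih
      _ ≤ ((2*j)+1+1) * ((2*j)+1) * (2*j).factorial := by
          have h1 : 2 * (j+1) = (2*j) + 1 + 1 := by ring
          rw [h1]
          have : (2*j)+1+1 ≤ ((2*j)+1+1) * ((2*j)+1) := by
            nlinarith [Nat.zero_le j]
          exact Nat.mul_le_mul_right _ this
      _ = ((2*j)+1+1).factorial := by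
          rw [Nat.factorial_succ, Nat.factorial_succ]; ring

lemma centralBinom_le_four_pow (k : ℕ) : Nat.centralBinom k ≤ 4 ^ k := by
  induction k with
  | zero => simp [Nat.centralBinom]
  | succ k ih =>
    have h := Nat.succ_mul_centralBinom_succ k
    have h2 : (k+1) * (k+1).centralBinom ≤ (k+1) * (4 * k.centralBinom) := by
      rw [h]
      have : 2 * (2 * k + 1) ≤ 4 * (k + 1) := by omega
      calc 2 * (2*k+1) * k.centralBinom ≤ 4 * (k+1) * k.centralBinom :=
            Nat.mul_le_mul_right _ this
        _ = (k+1) * (4 * k.centralBinom) := by ring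
    have h3 : (k+1).centralBinom ≤ 4 * k.centralBinom :=
      Nat.le_of_mul_le_mul_left h2 (Nat.succ_pos k)
    calc (k+1).centralBinom ≤ 4 * k.centralBinom := h3
      _ ≤ 4 * 4 ^ k := Nat.mul_le_mul_left _ ih
      _ = 4 ^ (k+1) := by ring

/-- `DD k / k! ≤ 2^k`. -/
lemma DD_div_fact_le (k : ℕ) : DD k / k.factorial ≤ 2 ^ k := by
  have hfact : (2*k).factorial = (2*k).choose k * (k.factorial * k.factorial) := by
    have hle : k ≤ 2 * k := by omega
    have h0 := Nat.choose_mul_factorial_mul_factorial hle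
    have h2 : 2*k - k = k := by omega
    rw [h2] at h0
    rw [← h0]; ring
  have hc : ((2*k).choose k : ℝ) ≤ 4 ^ k := by
    have : (2*k).choose k = Nat.centralBinom k := (Nat.centralBinom_eq_two_mul_choose k).symm
    rw [this]
    exact_mod_cast centralBinom_le_four_pow k
  rw [DD]
  rw [div_div]
  rw [div_le_iff₀ (by positivity)]
  push_cast [hfact]
  calc ((2*k).choose k : ℝ) * ((k.factorial:ℝ) * k.factorial)
      ≤ 4 ^ k * (k.factorial * k.factorial) := by
        apply mul_le_mul_of_nonneg_right hc (by positivity)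
    _ = 2^k * (2^k * (k.factorial:ℝ) * k.factorial) := by
        rw [show (4:ℝ) = 2^2 by norm_num, ← pow_mul]; ring
  
/-- Key termwise inequality: `C(2k,2j) * DD(k-j) ≤ DD(k) * C(k,j)` for `j ≤ k`. -/
lemma choose_DD_le (k j : ℕ) (h : j ≤ k) :
    ((2*k).choose (2*j) : ℝ) * DD (k - j) ≤ DD k * (k.choose j : ℝ) := by
  have h2 : 2*j ≤ 2*k := by omega
  have e1 : 2 * (k - j) = 2*k - 2*j := by omega
  have key : (2:ℝ)^j * j.factorial ≤ (2*j).factorial := by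
    exact_mod_cast two_pow_fact_le j
  have eL : ((2*k).choose (2*j) : ℝ) * DD (k - j)
      = (2*k).factorial / ((2*j).factorial * (2^(k-j) * (k-j).factorial)) := by
    rw [Nat.cast_choose ℝ h2, DD, e1]
    have p2 : ((2*k - 2*j).factorial : ℝ) ≠ 0 := by positivity
    field_simp
  have eR : DD k * (k.choose j : ℝ)
      = (2*k).factorial / (2^k * (j.factorial * (k-j).factorial)) := by
    rw [Nat.cast_choose ℝ h, DD]
    have p5 : ((k.factorial : ℝ)) ≠ 0 := by positivity
    field_simp
  rw [eL, eR]
  apply div_le_div_of_nonneg_left (by positivity) (by positivity)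
  have h2k : (2:ℝ)^k = 2^(k-j) * 2^j := by
    rw [← pow_add]; congr 1; omega
  calc (2:ℝ)^k * (j.factorial * (k-j).factorial)
      = (2^j * j.factorial) * (2^(k-j) * (k-j).factorial) := by rw [h2k]; ring
    _ ≤ (2*j).factorial * (2^(k-j) * (k-j).factorial) := by
        apply mul_le_mul_of_nonneg_right key (by positivity)

lemma sgn_not (b : Bool) : sgn (!b) = - sgn b := by cases b <;> simp [sgn]
lemma DD_zero : DD 0 = 1 := by simp [DD]

variable {ι : Type*} [Fintype ι] [DecidableEq ι]

lemma apow_nonneg (x : ℝ) (j : ℕ) : 0 ≤ x ^ (2*j) := Even.pow_nonneg (even_two_mul j) x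

lemma moment_bound (a : ι → ℝ) (s : Finset ι) :
    ∀ k : ℕ, ∑ σ : ι → Bool, (∑ i ∈ s, a i * sgn (σ i)) ^ (2*k)
      ≤ 2 ^ (Fintype.card ι) * DD k * (∑ i ∈ s, (a i)^2)^k := by
  induction s using Finset.induction_on with
  | empty =>
    intro k
    rcases Nat.eq_zero_or_pos k with hk | hk
    · subst hk
      simp only [Finset.sum_empty, Nat.mul_zero, pow_zero, Finset.sum_const, nsmul_eq_mul,
        mul_one, DD_zero]
      rw [Finset.card_univ, Fintype.card_fun]
      simp
    · have h2k : 2 * k ≠ 0 := by omega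
      have hk' : k ≠ 0 := by omega
      simp only [Finset.sum_empty, zero_pow h2k, zero_pow hk', Finset.sum_const, nsmul_eq_mul,
        mul_zero]
      exact le_refl 0
  | insert i₀ s hnot ih =>
    intro k
    have hsplit : ∀ σ : ι → Bool,
        (∑ i ∈ insert i₀ s, a i * sgn (σ i)) = a i₀ * sgn (σ i₀) + ∑ i ∈ s, a i * sgn (σ i) := by
      intro σ; rw [Finset.sum_insert hnot]
    set X : (ι → Bool) → ℝ := fun σ => ∑ i ∈ s, a i * sgn (σ i) with hX
    have hXupd : ∀ (σ : ι → Bool) (b : Bool), X (Function.update σ i₀ b) = X σ := by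
      intro σ b
      apply Finset.sum_congr rfl
      intro i hi
      have : i ≠ i₀ := by rintro rfl; exact hnot hi
      rw [Function.update_of_ne this]
    have hodd : ∀ p ∈ range (2*k+1), ¬ Even p →
        (∑ σ : ι → Bool, (a i₀ * sgn (σ i₀))^p * (X σ)^(2*k - p) * ((2*k).choose p : ℝ)) = 0 := by
      intro p _ hp
      refine Finset.sum_involution (fun σ _ => Function.update σ i₀ (!(σ i₀))) ?_ ?_ ?_ ?_
      · intro σ _
        have h1 : sgn (Function.update σ i₀ (!(σ i₀)) i₀) = - sgn (σ i₀) := by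
          rw [Function.update_self, sgn_not]
        rw [h1, hXupd]
        have hoddp : Odd p := Nat.odd_iff.2 (by
          rcases Nat.even_or_odd p with h | h
          · exact absurd h hp
          · exact Nat.odd_iff.1 h)
        have : (a i₀ * - sgn (σ i₀))^p = - (a i₀ * sgn (σ i₀))^p := by
          rw [show a i₀ * - sgn (σ i₀) = -(a i₀ * sgn (σ i₀)) by ring]
          exact Odd.neg_pow hoddp _
        rw [this]; ring
      · intro σ _ _
        intro hcontra
        have := congrFun hcontra i₀
        simp only [Function.update_self] at this
        exact (Bool.not_ne_self (σ i₀)) this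
      · intro σ _; exact Finset.mem_univ _
      · intro σ _
        funext i
        by_cases hi : i = i₀
        · subst hi; simp
        · simp only [Function.update_of_ne hi]
    have heq : ∑ p ∈ range (2*k+1), ∑ σ : ι → Bool,
        (a i₀ * sgn (σ i₀))^p * (X σ)^(2*k - p) * ((2*k).choose p : ℝ)
        = ∑ j ∈ range (k+1), ∑ σ : ι → Bool,
        (a i₀)^(2*j) * (X σ)^(2*(k - j)) * ((2*k).choose (2*j) : ℝ) := by
      rw [← Finset.sum_filter_of_ne (p := fun p => Even p) (fun p hp hne => by
        by_contra hodd'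
        exact hne (hodd p hp hodd'))]
      refine Finset.sum_bij' (fun p _ => p / 2) (fun j _ => 2 * j) ?_ ?_ ?_ ?_ ?_
      · intro p hp
        simp only [Finset.mem_filter, Finset.mem_range] at hp
        simp only [Finset.mem_range]
        omega
      · intro j hj
        simp only [Finset.mem_range] at hj
        simp only [Finset.mem_filter, Finset.mem_range]
        exact ⟨by omega, even_two_mul j⟩
      · intro p hp
        simp only [Finset.mem_filter, Finset.mem_range] at hp
        obtain ⟨hlt, t, ht⟩ := hp
        omega
      · intro j hj
        omega
      · intro p hp
        simp only [Finset.mem_filter, Finset.mem_range] at hp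
        obtain ⟨hlt, t, ht⟩ := hp
        have h2 : 2 * (p/2) = p := by omega
        apply Finset.sum_congr rfl
        intro σ _
        congr 1
        · congr 1
          · rw [mul_pow]
            conv_lhs => rw [show p = 2 * (p/2) from h2.symm]
            rw [sgn_pow_even, mul_one]
          · congr 1
            omega
        · rw [h2]
    calc ∑ σ : ι → Bool, (∑ i ∈ insert i₀ s, a i * sgn (σ i)) ^ (2*k)
        = ∑ σ : ι → Bool, ∑ p ∈ range (2*k+1),
            (a i₀ * sgn (σ i₀))^p * (X σ)^(2*k - p) * ((2*k).choose p : ℝ) := by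
          apply Finset.sum_congr rfl; intro σ _
          rw [hsplit σ, add_pow]
      _ = ∑ p ∈ range (2*k+1), ∑ σ : ι → Bool,
            (a i₀ * sgn (σ i₀))^p * (X σ)^(2*k - p) * ((2*k).choose p : ℝ) :=
          Finset.sum_comm
      _ = ∑ j ∈ range (k+1), ∑ σ : ι → Bool,
            (a i₀)^(2*j) * (X σ)^(2*(k - j)) * ((2*k).choose (2*j) : ℝ) := heq
      _ ≤ ∑ j ∈ range (k+1), ((2*k).choose (2*j) : ℝ) * (a i₀)^(2*j) *
            (2 ^ (Fintype.card ι) * DD (k-j) * (∑ i ∈ s, (a i)^2)^(k-j)) := by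
          apply Finset.sum_le_sum
          intro j hj
          have hnn : (0:ℝ) ≤ ((2*k).choose (2*j) : ℝ) * (a i₀)^(2*j) :=
            mul_nonneg (Nat.cast_nonneg _) (apow_nonneg _ _)
          calc ∑ σ : ι → Bool, (a i₀)^(2*j) * (X σ)^(2*(k - j)) * ((2*k).choose (2*j) : ℝ)
              = ((2*k).choose (2*j) : ℝ) * (a i₀)^(2*j) * ∑ σ : ι → Bool, (X σ)^(2*(k - j)) := by
                rw [Finset.mul_sum]; apply Finset.sum_congr rfl; intro σ _; ring
            _ ≤ ((2*k).choose (2*j) : ℝ) * (a i₀)^(2*j) *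
                (2 ^ (Fintype.card ι) * DD (k-j) * (∑ i ∈ s, (a i)^2)^(k-j)) :=
                mul_le_mul_of_nonneg_left (ih (k - j)) hnn
      _ ≤ ∑ j ∈ range (k+1), (k.choose j : ℝ) * (a i₀)^(2*j) *
            (2 ^ (Fintype.card ι) * DD k * (∑ i ∈ s, (a i)^2)^(k-j)) := by
          apply Finset.sum_le_sum
          intro j hj
          simp only [Finset.mem_range] at hj
          have hjk : j ≤ k := by omega
          have h1 := choose_DD_le k j hjk
          have hnn : (0:ℝ) ≤ (a i₀)^(2*j) * (2 ^ (Fintype.card ι)) * (∑ i ∈ s, (a i)^2)^(k-j) := by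
            have := apow_nonneg (a i₀) j
            positivity
          calc ((2*k).choose (2*j) : ℝ) * (a i₀)^(2*j) *
                (2 ^ (Fintype.card ι) * DD (k-j) * (∑ i ∈ s, (a i)^2)^(k-j))
              = (((2*k).choose (2*j) : ℝ) * DD (k-j)) *
                ((a i₀)^(2*j) * (2 ^ (Fintype.card ι)) * (∑ i ∈ s, (a i)^2)^(k-j)) := by ring
            _ ≤ (DD k * (k.choose j : ℝ)) *
                ((a i₀)^(2*j) * (2 ^ (Fintype.card ι)) * (∑ i ∈ s, (a i)^2)^(k-j)) :=
                mul_le_mul_of_nonneg_right h1 hnn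
            _ = (k.choose j : ℝ) * (a i₀)^(2*j) *
                (2 ^ (Fintype.card ι) * DD k * (∑ i ∈ s, (a i)^2)^(k-j)) := by ring
      _ = 2 ^ (Fintype.card ι) * DD k * (∑ i ∈ insert i₀ s, (a i)^2)^k := by
          rw [Finset.sum_insert hnot, add_pow]
          rw [Finset.mul_sum]
          apply Finset.sum_congr rfl
          intro j hj
          rw [pow_mul, ← pow_mul]
          ring

lemma exp_eq_tsum' (y : ℝ) : Real.exp y = ∑' k : ℕ, y^k / k.factorial := by
  rw [Real.exp_eq_exp_ℝ, NormedSpace.exp_eq_tsum_div]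

lemma mgf_bound (a : ι → ℝ) (lam : ℝ) (hl : 0 ≤ lam)
    (hc : 2 * lam * (∑ i, (a i)^2) < 1) :
    ∑ σ : ι → Bool, Real.exp (lam * (∑ i, a i * sgn (σ i))^2)
      ≤ 2 ^ (Fintype.card ι) * (1 - 2 * lam * (∑ i, (a i)^2))⁻¹ := by
  set c := ∑ i, (a i)^2 with hcdef
  have hcnn : (0:ℝ) ≤ c := by positivity
  have hr : (0:ℝ) ≤ 2*lam*c := by positivity
  set X : (ι → Bool) → ℝ := fun σ => ∑ i, a i * sgn (σ i) with hXdef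
  have hterm : ∀ k : ℕ, ∑ σ : ι → Bool, (lam * (X σ)^2)^k / k.factorial
      ≤ 2 ^ (Fintype.card ι) * (2*lam*c)^k := by
    intro k
    have h1 : ∀ σ : ι → Bool, (lam * (X σ)^2)^k / k.factorial
        = (lam^k / k.factorial) * (X σ)^(2*k) := by
      intro σ
      rw [mul_pow, ← pow_mul, mul_comm 2 k]
      ring
    calc ∑ σ : ι → Bool, (lam * (X σ)^2)^k / k.factorial
        = (lam^k / k.factorial) * ∑ σ : ι → Bool, (X σ)^(2*k) := by
          rw [Finset.mul_sum]; exact Finset.sum_congr rfl (fun σ _ => h1 σ)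
      _ ≤ (lam^k / k.factorial) * (2 ^ (Fintype.card ι) * DD k * c^k) := by
          apply mul_le_mul_of_nonneg_left _ (by positivity)
          exact moment_bound a Finset.univ k
      _ = 2 ^ (Fintype.card ι) * ((DD k / k.factorial) * (lam^k * c^k)) := by ring
      _ ≤ 2 ^ (Fintype.card ι) * (2^k * (lam^k * c^k)) := by
          apply mul_le_mul_of_nonneg_left _ (by positivity)
          apply mul_le_mul_of_nonneg_right (DD_div_fact_le k) (by positivity)
      _ = 2 ^ (Fintype.card ι) * (2*lam*c)^k := by
          rw [mul_pow, mul_pow]; ring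
  have hsummR : Summable (fun k : ℕ => 2 ^ (Fintype.card ι) * (2*lam*c)^k) :=
    (summable_geometric_of_lt_one hr hc).mul_left _
  have hsummL : Summable (fun k : ℕ => ∑ σ : ι → Bool, (lam * (X σ)^2)^k / k.factorial) := by
    apply Summable.of_nonneg_of_le _ hterm hsummR
    intro k
    apply Finset.sum_nonneg
    intro σ _
    have : (0:ℝ) ≤ lam * (X σ)^2 := by positivity
    positivity
  calc ∑ σ : ι → Bool, Real.exp (lam * (X σ)^2)
      = ∑ σ : ι → Bool, ∑' k : ℕ, (lam * (X σ)^2)^k / k.factorial :=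
        Finset.sum_congr rfl (fun σ _ => exp_eq_tsum' _)
    _ = ∑' k : ℕ, ∑ σ : ι → Bool, (lam * (X σ)^2)^k / k.factorial :=
        (Summable.tsum_finsetSum (fun σ _ => Real.summable_pow_div_factorial _)).symm
    _ ≤ ∑' k : ℕ, 2 ^ (Fintype.card ι) * (2*lam*c)^k :=
        Summable.tsum_le_tsum hterm hsummL hsummR
    _ = 2 ^ (Fintype.card ι) * (1 - 2*lam*c)⁻¹ := by
        rw [tsum_mul_left, tsum_geometric_of_lt_one hr hc]

noncomputable def en {N : ℕ} (u : Fin N → ℝ) : ℝ := Real.sqrt (∑ i, u i ^ 2)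

lemma en_nonneg {N : ℕ} (u : Fin N → ℝ) : 0 ≤ en u := Real.sqrt_nonneg _

lemma en_eq_norm {N : ℕ} (u : Fin N → ℝ) :
    en u = ‖(WithLp.equiv 2 (Fin N → ℝ)).symm u‖ := by
  rw [EuclideanSpace.norm_eq, en]
  congr 1
  apply Finset.sum_congr rfl
  intro i _
  rw [Real.norm_eq_abs, sq_abs]
  rfl

lemma en_triangle {N : ℕ} (u v : Fin N → ℝ) :
    en (fun i => u i + v i) ≤ en u + en v := by
  rw [en_eq_norm, en_eq_norm, en_eq_norm]
  have : (WithLp.equiv 2 (Fin N → ℝ)).symm (fun i => u i + v i)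
      = (WithLp.equiv 2 (Fin N → ℝ)).symm u + (WithLp.equiv 2 (Fin N → ℝ)).symm v := rfl
  rw [this]
  exact norm_add_le _ _

lemma en_smul {N : ℕ} (t : ℝ) (u : Fin N → ℝ) : en (fun i => t * u i) = |t| * en u := by
  rw [en, en]
  have : ∀ i : Fin N, (t * u i)^2 = t^2 * (u i)^2 := fun i => by ring
  simp_rw [this]
  rw [← Finset.mul_sum, Real.sqrt_mul (sq_nonneg t), Real.sqrt_sq_eq_abs]

lemma cs_abs {N : ℕ} (a b : Fin N → ℝ) : |∑ i, a i * b i| ≤ en a * en b := by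
  have h := Finset.sum_mul_sq_le_sq_mul_sq Finset.univ a b
  rw [← Real.sqrt_sq_eq_abs, en, en, ← Real.sqrt_mul (by positivity)]
  exact Real.sqrt_le_sqrt h

lemma en_le_one {N : ℕ} {u : Fin N → ℝ} (h : ∑ i, u i ^ 2 ≤ 1) : en u ≤ 1 := by
  rw [en]
  calc Real.sqrt (∑ i, u i ^2) ≤ Real.sqrt 1 := Real.sqrt_le_sqrt h
    _ = 1 := Real.sqrt_one

lemma abs_le_one_of_sq_sum {N : ℕ} {u : Fin N → ℝ} (h : ∑ i, u i ^ 2 ≤ 1) (i : Fin N) :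
    |u i| ≤ 1 := by
  have h1 : u i ^ 2 ≤ 1 :=
    le_trans (Finset.single_le_sum (f := fun i' => u i' ^ 2)
      (fun i' _ => sq_nonneg _) (Finset.mem_univ i)) h
  calc |u i| = Real.sqrt ((u i)^2) := (Real.sqrt_sq_eq_abs _).symm
    _ ≤ Real.sqrt 1 := Real.sqrt_le_sqrt h1
    _ = 1 := Real.sqrt_one

variable {m : ℕ} {n : Fin (m+1) → ℕ}

/-- the contracted vector: contraction of the sign tensor with the first `m` vectors. -/
noncomputable def V (ε : ((j : Fin (m+1)) → Fin (n j)) → Bool)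
    (x : (j : Fin m) → (Fin (n j.castSucc) → ℝ)) (c : Fin (n (Fin.last m))) : ℝ :=
  ∑ g : (j : Fin m) → Fin (n j.castSucc),
    sgn (ε (Fin.snoc g c)) * ∏ j : Fin m, x j (g j)

lemma snoc_bijective :
    Function.Bijective (fun p : ((j : Fin m) → Fin (n j.castSucc)) × Fin (n (Fin.last m)) =>
      (Fin.snoc p.1 p.2 : (j : Fin (m+1)) → Fin (n j))) := by
  constructor
  · rintro ⟨g, c⟩ ⟨g', c'⟩ h
    simp only at h
    have h1 : ∀ j : Fin m, g j = g' j := by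
      intro j
      have := congrFun h j.castSucc
      rwa [Fin.snoc_castSucc, Fin.snoc_castSucc] at this
    have h2 : c = c' := by
      have := congrFun h (Fin.last m)
      rwa [Fin.snoc_last, Fin.snoc_last] at this
    exact Prod.ext (funext h1) h2
  · intro f
    refine ⟨⟨fun j => f j.castSucc, f (Fin.last m)⟩, ?_⟩
    simp only
    funext j
    exact Fin.lastCases (by rw [Fin.snoc_last]) (fun i => by rw [Fin.snoc_castSucc]) j

lemma sum_decomp (F : ((j : Fin (m+1)) → Fin (n j)) → ℝ) :
    ∑ f, F f = ∑ c : Fin (n (Fin.last m)), ∑ g : (j : Fin m) → Fin (n j.castSucc),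
      F (Fin.snoc g c) := by
  rw [← Fintype.sum_bijective _ snoc_bijective (fun p => F (Fin.snoc p.1 p.2)) F (fun p => rfl)]
  rw [Fintype.sum_prod_type]
  exact Finset.sum_comm

/-- pairing decomposition -/
lemma pair_decomp (ε : ((j : Fin (m+1)) → Fin (n j)) → Bool)
    (x : (j : Fin (m+1)) → (Fin (n j) → ℝ)) :
    ∑ f, sgn (ε f) * ∏ j, x j (f j)
      = ∑ c, x (Fin.last m) c * V ε (fun j => x j.castSucc) c := by
  rw [sum_decomp (fun f => sgn (ε f) * ∏ j, x j (f j))]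
  apply Finset.sum_congr rfl
  intro c _
  rw [V, Finset.mul_sum]
  apply Finset.sum_congr rfl
  intro g _
  rw [Fin.prod_univ_castSucc]
  simp only [Fin.snoc_castSucc, Fin.snoc_last]
  ring

lemma prod_update (x : (j : Fin m) → (Fin (n j.castSucc) → ℝ)) (j₀ : Fin m)
    (w : Fin (n j₀.castSucc) → ℝ) (g : (j : Fin m) → Fin (n j.castSucc)) :
    ∏ j, (Function.update x j₀ w) j (g j)
      = w (g j₀) * ∏ j ∈ Finset.univ.erase j₀, x j (g j) := by
  rw [← Finset.mul_prod_erase Finset.univ _ (Finset.mem_univ j₀)]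
  congr 1
  · rw [Function.update_self]
  · apply Finset.prod_congr rfl
    intro j hj
    rw [Function.update_of_ne (Finset.mem_erase.1 hj).1]

lemma V_update_add (ε : ((j : Fin (m+1)) → Fin (n j)) → Bool)
    (x : (j : Fin m) → (Fin (n j.castSucc) → ℝ)) (j₀ : Fin m)
    (y z : Fin (n j₀.castSucc) → ℝ) (c : Fin (n (Fin.last m))) :
    V ε (Function.update x j₀ (y + z)) c
      = V ε (Function.update x j₀ y) c + V ε (Function.update x j₀ z) c := by
  rw [V, V, V, ← Finset.sum_add_distrib]
  apply Finset.sum_congr rfl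
  intro g _
  rw [prod_update, prod_update, prod_update]
  simp only [Pi.add_apply]
  ring

lemma V_update_smul (ε : ((j : Fin (m+1)) → Fin (n j)) → Bool)
    (x : (j : Fin m) → (Fin (n j.castSucc) → ℝ)) (j₀ : Fin m)
    (t : ℝ) (y : Fin (n j₀.castSucc) → ℝ) (c : Fin (n (Fin.last m))) :
    V ε (Function.update x j₀ (fun v => t * y v)) c = t * V ε (Function.update x j₀ y) c := by
  rw [V, V, Finset.mul_sum]
  apply Finset.sum_congr rfl
  intro g _
  rw [prod_update, prod_update]
  ring

lemma V_update_self (ε : ((j : Fin (m+1)) → Fin (n j)) → Bool)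
    (x : (j : Fin m) → (Fin (n j.castSucc) → ℝ)) (j₀ : Fin m) :
    Function.update x j₀ (x j₀) = x := Function.update_eq_self _ _

/-- crude bound on V -/
lemma V_crude (ε : ((j : Fin (m+1)) → Fin (n j)) → Bool)
    (x : (j : Fin m) → (Fin (n j.castSucc) → ℝ))
    (hx : ∀ j, ∑ v, (x j v)^2 ≤ 1) (c : Fin (n (Fin.last m))) :
    |V ε x c| ≤ (Fintype.card ((j : Fin m) → Fin (n j.castSucc)) : ℝ) := by
  rw [V]
  calc |∑ g : (j : Fin m) → Fin (n j.castSucc), sgn (ε (Fin.snoc g c)) * ∏ j, x j (g j)|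
      ≤ ∑ g : (j : Fin m) → Fin (n j.castSucc), |sgn (ε (Fin.snoc g c)) * ∏ j, x j (g j)| :=
        Finset.abs_sum_le_sum_abs _ _
    _ ≤ ∑ _g : (j : Fin m) → Fin (n j.castSucc), (1:ℝ) := by
        apply Finset.sum_le_sum
        intro g _
        rw [abs_mul, sgn_abs, one_mul, abs_prod]
        calc ∏ j, |x j (g j)| ≤ ∏ (_j : Fin m), (1:ℝ) := by
              apply Finset.prod_le_prod (fun j _ => abs_nonneg _)
              intro j _
              exact abs_le_one_of_sq_sum (hx j) (g j)
          _ = 1 := by simp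
    _ = (Fintype.card ((j : Fin m) → Fin (n j.castSucc)) : ℝ) := by
        rw [Finset.sum_const, Finset.card_univ, nsmul_eq_mul, mul_one]

lemma net_exists (k : ℕ) {θ : ℝ} (hθ : 0 < θ) :
    ∃ Y : Finset (EuclideanSpace ℝ (Fin k)),
      (∀ y ∈ Y, ‖y‖ ≤ 1) ∧ ((Y.card : ℝ) ≤ (1 + 2/θ)^k) ∧
      (∀ x : EuclideanSpace ℝ (Fin k), ‖x‖ ≤ 1 → ∃ y ∈ Y, ‖x - y‖ ≤ θ) := by
  rcases Nat.eq_zero_or_pos k with hk | hk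
  · subst hk
    refine ⟨{0}, ?_, ?_, ?_⟩
    · intro y hy
      simp only [Finset.mem_singleton] at hy
      subst hy; simp
    · simp
    · intro x _
      refine ⟨0, Finset.mem_singleton_self 0, ?_⟩
      have : x = 0 := Subsingleton.elim x 0
      simp only [this, sub_zero, norm_zero]
      exact hθ.le
  -- k ≥ 1
  haveI : Nontrivial (EuclideanSpace ℝ (Fin k)) := by
    refine ⟨EuclideanSpace.single (⟨0, hk⟩ : Fin k) (1:ℝ), 0, ?_⟩
    intro h
    have := congrArg (fun v : EuclideanSpace ℝ (Fin k) => v (⟨0, hk⟩ : Fin k)) h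
    simp [EuclideanSpace.single_apply] at this
  set E := EuclideanSpace ℝ (Fin k)
  -- Zorn to get a maximal θ-separated subset of the closed unit ball
  set S : Set (Set E) := {s | s ⊆ closedBall 0 1 ∧ s.Pairwise (fun x y => θ ≤ dist x y)} with hS
  obtain ⟨M, hMS, hMmax⟩ : ∃ M ∈ S, ∀ s ∈ S, M ⊆ s → s = M := by
    obtain ⟨M, hM⟩ := zorn_subset S (by
      intro c hcS hchain
      refine ⟨⋃₀ c, ⟨?_, ?_⟩, fun s hs => Set.subset_sUnion_of_mem hs⟩
      · intro x hx
        obtain ⟨s, hsc, hxs⟩ := hx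
        exact (hcS hsc).1 hxs
      · intro x hx y hy hxy
        obtain ⟨s, hsc, hxs⟩ := hx
        obtain ⟨t, htc, hyt⟩ := hy
        rcases hchain.total hsc htc with h | h
        · exact (hcS htc).2 (h hxs) hyt hxy
        · exact (hcS hsc).2 hxs (h hyt) hxy)
    exact ⟨M, hM.prop, fun s hs hsub => hM.eq_of_ge hs hsub⟩
  obtain ⟨hMball, hMsep⟩ := hMS
  -- coverage
  have hcover : ∀ x ∈ closedBall (0:E) 1, ∃ y ∈ M, dist x y ≤ θ := by
    intro x hx
    by_contra hno
    push_neg at hno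
    have hxM : x ∉ M := fun hxM => by
      have := hno x hxM; exact absurd (lt_of_lt_of_eq this (dist_self x)) (not_lt.2 hθ.le)
    have : insert x M ∈ S := by
      constructor
      · exact Set.insert_subset hx hMball
      · intro u hu v hv huv
        rcases hu with rfl | hu
        · rcases hv with rfl | hv
          · exact absurd rfl huv
          · exact le_of_lt (hno v hv)
        · rcases hv with rfl | hv
          · exact le_of_lt (lt_of_lt_of_eq (hno u hu) (dist_comm _ _))
          · exact hMsep hu hv huv
    have := hMmax _ this (Set.subset_insert x M)
    exact hxM (this ▸ Set.mem_insert x M)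
  -- cardinality bound for finite subsets
  have hcard : ∀ F : Finset E, ↑F ⊆ M → (F.card : ℝ) ≤ (1 + 2/θ)^k := by
    intro F hFM
    have hdisj : (↑F : Set E).PairwiseDisjoint (fun y => ball y (θ/2)) := by
      intro u hu v hv huv
      apply Set.disjoint_left.2
      intro z hzu hzv
      have : dist u v < θ := by
        have h1 := mem_ball.1 hzu
        have h2 := mem_ball.1 hzv
        calc dist u v ≤ dist u z + dist z v := dist_triangle _ _ _
          _ < θ/2 + θ/2 := add_lt_add (by rw [dist_comm]; exact h1) h2
          _ = θ := by ring
      exact absurd (hMsep (hFM hu) (hFM hv) huv) (not_le.2 this)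
    have hsub : (⋃ y ∈ F, ball y (θ/2)) ⊆ closedBall (0:E) (1 + θ/2) := by
      intro z hz
      simp only [Set.mem_iUnion] at hz
      obtain ⟨y, hyF, hzy⟩ := hz
      rw [mem_closedBall]
      calc dist z 0 ≤ dist z y + dist y 0 := dist_triangle _ _ _
        _ ≤ θ/2 + 1 := add_le_add (le_of_lt (mem_ball.1 hzy)) (mem_closedBall.1 (hMball (hFM hyF)))
        _ = 1 + θ/2 := by ring
    have hvol : ∑ y ∈ F, volume (ball y (θ/2)) ≤ volume (closedBall (0:E) (1 + θ/2)) := by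
      rw [← measure_biUnion_finset hdisj (fun y _ => measurableSet_ball)]
      exact measure_mono hsub
    have hrank : Module.finrank ℝ E = k := finrank_euclideanSpace_fin
    have hballvol : ∀ y : E, volume (ball y (θ/2)) =
        ENNReal.ofReal ((θ/2)^k) * volume (ball (0:E) 1) := by
      intro y
      rw [Measure.addHaar_ball volume y (by positivity : (0:ℝ) ≤ θ/2), hrank]
    have hcbvol : volume (closedBall (0:E) (1 + θ/2)) =
        ENNReal.ofReal ((1 + θ/2)^k) * volume (ball (0:E) 1) := by
      rw [Measure.addHaar_closedBall volume _ (by positivity : (0:ℝ) ≤ 1 + θ/2), hrank]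
    rw [hcbvol] at hvol
    simp only [hballvol, Finset.sum_const, nsmul_eq_mul] at hvol
    have hballpos : volume (ball (0:E) 1) ≠ 0 :=
      (measure_ball_pos volume 0 one_pos).ne'
    have hballtop : volume (ball (0:E) 1) ≠ ⊤ := measure_ball_lt_top.ne
    have h1 : (F.card : ENNReal) * ENNReal.ofReal ((θ/2)^k) ≤ ENNReal.ofReal ((1 + θ/2)^k) := by
      have := (ENNReal.mul_le_mul_iff_left hballpos hballtop).1 (by
        calc (F.card : ENNReal) * ENNReal.ofReal ((θ/2)^k) * volume (ball (0:E) 1)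
            = (F.card : ENNReal) * (ENNReal.ofReal ((θ/2)^k) * volume (ball (0:E) 1)) := by
              rw [mul_assoc]
          _ ≤ ENNReal.ofReal ((1 + θ/2)^k) * volume (ball (0:E) 1) := hvol)
      exact this
    have h2 : ENNReal.ofReal ((F.card : ℝ) * (θ/2)^k) ≤ ENNReal.ofReal ((1 + θ/2)^k) := by
      rw [ENNReal.ofReal_mul (by positivity)]
      rwa [ENNReal.ofReal_natCast]
    have h3 : (F.card : ℝ) * (θ/2)^k ≤ (1 + θ/2)^k := by
      have := (ENNReal.ofReal_le_ofReal_iff (by positivity)).1 h2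
      exact this
    have hp : (0:ℝ) < (θ/2)^k := by positivity
    rw [← le_div_iff₀ hp] at h3
    calc (F.card : ℝ) ≤ (1 + θ/2)^k / (θ/2)^k := h3
      _ = ((1 + θ/2)/(θ/2))^k := by rw [← div_pow]
      _ = (1 + 2/θ)^k := by
          congr 1
          field_simp
          ring
  -- M is finite
  have hMfin : M.Finite := by
    by_contra hinf
    have hinf' : M.Infinite := hinf
    obtain ⟨F, hFM, hFcard⟩ := hinf'.exists_subset_card_eq (Nat.ceil ((1 + 2/θ)^k) + 1)
    have := hcard F hFM
    rw [hFcard] at this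
    have h1 : ((1 + 2/θ)^k : ℝ) ≤ Nat.ceil ((1 + 2/θ)^k) := Nat.le_ceil _
    push_cast at this
    linarith
  refine ⟨hMfin.toFinset, ?_, ?_, ?_⟩
  · intro y hy
    rw [Set.Finite.mem_toFinset] at hy
    have := hMball hy
    rwa [mem_closedBall, dist_zero_right] at this
  · apply hcard
    rw [Set.Finite.coe_toFinset]
  · intro x hx
    have hx' : x ∈ closedBall (0:E) 1 := by rwa [mem_closedBall, dist_zero_right]
    obtain ⟨y, hyM, hxy⟩ := hcover x hx'
    exact ⟨y, (Set.Finite.mem_toFinset hMfin).2 hyM, by rwa [dist_eq_norm] at hxy⟩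

lemma net_to_global (ε : ((j : Fin (m+1)) → Fin (n j)) → Bool)
    {θ A : ℝ} (hθ : 0 < θ) (hA0 : 0 ≤ A) (hmθ : (m:ℝ) * θ < 1)
    (Y : (j : Fin m) → Finset (Fin (n j.castSucc) → ℝ))
    (hYball : ∀ j, ∀ y ∈ Y j, ∑ v, (y v)^2 ≤ 1)
    (hYnet : ∀ (j : Fin m) (x : Fin (n j.castSucc) → ℝ), (∑ v, (x v)^2 ≤ 1) →
      ∃ y ∈ Y j, en (fun v => x v - y v) ≤ θ)
    (hA : ∀ y : (j : Fin m) → (Fin (n j.castSucc) → ℝ), (∀ j, y j ∈ Y j) → en (V ε y) ≤ A) :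
    ∀ x : (j : Fin m) → (Fin (n j.castSucc) → ℝ), (∀ j, ∑ v, (x j v)^2 ≤ 1) →
      en (V ε x) ≤ A / (1 - m * θ) := by
  set Ball : ((j : Fin m) → (Fin (n j.castSucc) → ℝ)) → Prop :=
    fun x => ∀ j, ∑ v, (x j v)^2 ≤ 1 with hBall
  set Sset : Set ℝ := {r | ∃ x, Ball x ∧ r = en (V ε x)} with hSset
  have hne : Sset.Nonempty := by
    refine ⟨en (V ε (fun _ _ => 0)), ⟨fun _ _ => 0, ?_, rfl⟩⟩
    intro j; simp
  have hbdd : BddAbove Sset := by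
    refine ⟨Real.sqrt ((Fintype.card (Fin (n (Fin.last m))) : ℝ) *
      (Fintype.card ((j : Fin m) → Fin (n j.castSucc)) : ℝ)^2), ?_⟩
    rintro r ⟨x, hx, rfl⟩
    rw [en]
    apply Real.sqrt_le_sqrt
    calc ∑ c, (V ε x c)^2 ≤ ∑ _c : Fin (n (Fin.last m)),
          ((Fintype.card ((j : Fin m) → Fin (n j.castSucc)) : ℝ))^2 := by
          apply Finset.sum_le_sum
          intro c _
          have h1 := V_crude ε x hx c
          nlinarith [abs_nonneg (V ε x c), sq_abs (V ε x c)]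
      _ = (Fintype.card (Fin (n (Fin.last m))) : ℝ) *
          (Fintype.card ((j : Fin m) → Fin (n j.castSucc)) : ℝ)^2 := by
          rw [Finset.sum_const, Finset.card_univ, nsmul_eq_mul]
  set s : ℝ := sSup Sset with hs
  have hmem_le : ∀ x, Ball x → en (V ε x) ≤ s := by
    intro x hx
    exact le_csSup hbdd ⟨x, hx, rfl⟩
  have hs0 : 0 ≤ s := by
    obtain ⟨r, x, hx, rfl⟩ := hne
    exact le_trans (en_nonneg _) (hmem_le x hx)
  -- replacement induction
  have hrepl : ∀ k : ℕ, k ≤ m → ∀ x, Ball x → ∃ z, Ball z ∧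
      (∀ j : Fin m, (j:ℕ) < k → z j ∈ Y j) ∧ en (V ε x) ≤ en (V ε z) + k * θ * s := by
    intro k
    induction k with
    | zero =>
      intro _ x hx
      exact ⟨x, hx, fun j hj => absurd hj (Nat.not_lt_zero _), by simp⟩
    | succ k ih =>
      intro hk1 x hx
      obtain ⟨z, hzball, hznet, hzbound⟩ := ih (by omega) x hx
      set j₀ : Fin m := ⟨k, by omega⟩ with hj₀
      obtain ⟨y, hyY, hyclose⟩ := hYnet j₀ (z j₀) (hzball j₀)
      set δ : Fin (n j₀.castSucc) → ℝ := fun v => z j₀ v - y v with hδ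
      set z' := Function.update z j₀ y with hz'
      have hz'ball : Ball z' := by
        intro j
        by_cases hj : j = j₀
        · rw [hz', hj, Function.update_self]; exact hYball j₀ y hyY
        · rw [hz', Function.update_of_ne hj]; exact hzball j
      have hz'net : ∀ j : Fin m, (j:ℕ) < k + 1 → z' j ∈ Y j := by
        intro j hj
        by_cases hjj : j = j₀
        · subst hjj; rw [hz', Function.update_self]; exact hyY
        · have : (j:ℕ) < k := by
            rcases Nat.lt_succ_iff_lt_or_eq.1 hj with h | h
            · exact h
            · exfalso; apply hjj; apply Fin.ext; rw [h]
          rw [hz', Function.update_of_ne hjj]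
          exact hznet j this
      -- en (V z) ≤ en (V z') + θ * s
      have hVsplit : ∀ c, V ε z c = V ε z' c + V ε (Function.update z j₀ δ) c := by
        intro c
        have h1 : Function.update z j₀ (y + δ) = z := by
          have : y + δ = z j₀ := by funext v; simp [hδ]
          rw [this]; exact Function.update_eq_self _ _
        have h2 := V_update_add ε z j₀ y δ c
        rw [h1] at h2
        exact h2
      have hδbound : en (V ε (Function.update z j₀ δ)) ≤ θ * s := by
        set t := en δ with ht
        have ht0 : 0 ≤ t := en_nonneg _
        rcases eq_or_lt_of_le ht0 with h0 | hpos
        · -- t = 0 : δ has en zero; V(update) = t * something? use scaling argument anyway: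
          -- en δ = 0 → δ = 0 since sqrt of sum of squares
          have hδ0 : δ = fun _ => 0 := by
            funext v
            have h1 : Real.sqrt (∑ v', δ v' ^2) = 0 := h0.symm
            have h2 : ∑ v', δ v' ^2 = 0 := by
              have hnn : 0 ≤ ∑ v', δ v' ^2 := by positivity
              rcases eq_or_lt_of_le hnn with h | h
              · exact h.symm
              · exfalso
                have := Real.sqrt_pos.2 h
                rw [h1] at this; exact lt_irrefl 0 this
            have := (Finset.sum_eq_zero_iff_of_nonneg (fun v' _ => sq_nonneg (δ v'))).1 h2 v
              (Finset.mem_univ v)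
            exact pow_eq_zero_iff (by norm_num) |>.1 this
          have : ∀ c, V ε (Function.update z j₀ δ) c = 0 := by
            intro c
            have h1 : δ = (fun v => (0:ℝ) * δ v) := by rw [hδ0]; funext v; ring
            rw [h1, V_update_smul]; ring
          have : en (V ε (Function.update z j₀ δ)) = 0 := by
            rw [en]
            simp only [this]
            simp
          rw [this]; positivity
        · set u : Fin (n j₀.castSucc) → ℝ := fun v => δ v / t with hu
          have huball : ∑ v, (u v)^2 ≤ 1 := by
            have h1 : ∑ v, (u v)^2 = (∑ v, δ v ^2) / t^2 := by
              rw [Finset.sum_div]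
              apply Finset.sum_congr rfl
              intro v _
              rw [hu]
              ring
            rw [h1]
            have h2 : t^2 = ∑ v, δ v ^2 := Real.sq_sqrt (by positivity)
            rw [← h2]
            have : (0:ℝ) < t^2 := by positivity
            rw [div_self (ne_of_gt this)]
          have hδu : δ = fun v => t * u v := by
            funext v
            rw [hu]
            field_simp
          have h2 : ∀ c, V ε (Function.update z j₀ δ) c = t * V ε (Function.update z j₀ u) c := by
            intro c
            conv_lhs => rw [hδu]
            exact V_update_smul ε z j₀ t u c
          have h3 : en (V ε (Function.update z j₀ δ)) = t * en (V ε (Function.update z j₀ u)) := by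
            have : V ε (Function.update z j₀ δ) = fun c => t * V ε (Function.update z j₀ u) c := by
              funext c; exact h2 c
            rw [this, en_smul, abs_of_pos hpos]
          rw [h3]
          have h4 : Ball (Function.update z j₀ u) := by
            intro j
            by_cases hj : j = j₀
            · subst hj; rw [Function.update_self]; exact huball
            · rw [Function.update_of_ne hj]; exact hzball j
          calc t * en (V ε (Function.update z j₀ u)) ≤ t * s := by
                apply mul_le_mul_of_nonneg_left (hmem_le _ h4) ht0
            _ ≤ θ * s := mul_le_mul_of_nonneg_right hyclose hs0
      have hzz' : en (V ε z) ≤ en (V ε z') + θ * s := by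
        have h1 : en (V ε z) ≤ en (V ε z') + en (V ε (Function.update z j₀ δ)) := by
          have : V ε z = fun c => V ε z' c + V ε (Function.update z j₀ δ) c := by
            funext c; exact hVsplit c
          rw [this]
          exact en_triangle _ _
        linarith
      refine ⟨z', hz'ball, hz'net, ?_⟩
      push_cast
      calc en (V ε x) ≤ en (V ε z) + k * θ * s := hzbound
        _ ≤ (en (V ε z') + θ * s) + k * θ * s := by linarith
        _ = en (V ε z') + (k + 1) * θ * s := by ring
  -- conclude
  have hstep : ∀ x, Ball x → en (V ε x) ≤ A + m * θ * s := by
    intro x hx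
    obtain ⟨z, hzball, hznet, hzbound⟩ := hrepl m le_rfl x hx
    have : ∀ j, z j ∈ Y j := fun j => hznet j j.isLt
    calc en (V ε x) ≤ en (V ε z) + m * θ * s := hzbound
      _ ≤ A + m * θ * s := by
          have := hA z this
          linarith
  have hsle : s ≤ A + m * θ * s := by
    apply Real.sSup_le
    · rintro r ⟨x, hx, rfl⟩
      exact hstep x hx
    · have : 0 ≤ (m:ℝ) * θ * s := by positivity
      linarith
  have hfinal : s ≤ A / (1 - m * θ) := by
    rw [le_div_iff₀ (by linarith)]
    nlinarith
  intro x hx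
  exact le_trans (hmem_le x hx) hfinal

lemma snoc_eta (f : (j : Fin (m+1)) → Fin (n j)) :
    (Fin.snoc (fun j => f j.castSucc) (f (Fin.last m)) : (j : Fin (m+1)) → Fin (n j)) = f := by
  funext j
  exact Fin.lastCases (by rw [Fin.snoc_last]) (fun i => by rw [Fin.snoc_castSucc]) j

/-- factorization of a sum over sign assignments of a product over the last coordinate -/
lemma eps_factorize (f : (c : Fin (n (Fin.last m))) → (((j : Fin m) → Fin (n j.castSucc)) → Bool) → ℝ) :
    ∑ ε : ((j : Fin (m+1)) → Fin (n j)) → Bool,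
        ∏ c : Fin (n (Fin.last m)), f c (fun g => ε (Fin.snoc g c))
      = ∏ c : Fin (n (Fin.last m)), ∑ ρ : ((j : Fin m) → Fin (n j.castSucc)) → Bool, f c ρ := by
  classical
  set G := (j : Fin m) → Fin (n j.castSucc)
  set C := Fin (n (Fin.last m))
  set Φ : ((c : C) → (G → Bool)) → (((j : Fin (m+1)) → Fin (n j)) → Bool) :=
    fun h fidx => h (fidx (Fin.last m)) (fun j => fidx j.castSucc) with hΦ
  have hΦbij : Function.Bijective Φ := by
    constructor
    · intro h h' hhh
      funext c g
      have := congrFun hhh (Fin.snoc g c)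
      simpa only [hΦ, Fin.snoc_last, Fin.snoc_castSucc] using this
    · intro ε
      refine ⟨fun c g => ε (Fin.snoc g c), ?_⟩
      funext fidx
      simp only [hΦ]
      congr 1
      exact snoc_eta fidx
  rw [Finset.prod_univ_sum]
  rw [Fintype.piFinset_univ]
  rw [← Fintype.sum_bijective Φ hΦbij _ _ (fun h => ?_)]
  simp only [hΦ]
  apply Finset.prod_congr rfl
  intro c _
  congr 1
  funext g
  simp only [Fin.snoc_last, Fin.snoc_castSucc]

lemma sq_sum_prod_le_one (y : (j : Fin m) → (Fin (n j.castSucc) → ℝ))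
    (hy : ∀ j, ∑ v, (y j v)^2 ≤ 1) :
    ∑ g : (j : Fin m) → Fin (n j.castSucc), (∏ j, y j (g j))^2 ≤ 1 := by
  classical
  have h1 : ∑ g : (j : Fin m) → Fin (n j.castSucc), (∏ j, y j (g j))^2
      = ∏ j : Fin m, ∑ v, (y j v)^2 := by
    rw [Finset.prod_univ_sum, Fintype.piFinset_univ]
    apply Finset.sum_congr rfl
    intro g _
    rw [← Finset.prod_pow]
  rw [h1]
  apply Finset.prod_le_one
  · intro j _; positivity
  · intro j _; exact hy j

lemma exists_good_eps (lam A : ℝ) (hl : 0 < lam) (hl2 : lam < 1/2) (hA0 : 0 ≤ A)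
    (Y : (j : Fin m) → Finset (Fin (n j.castSucc) → ℝ))
    (hYball : ∀ j, ∀ y ∈ Y j, ∑ v, (y v)^2 ≤ 1)
    (hcount : (∏ j, ((Y j).card : ℝ)) * ((1 - 2*lam)⁻¹ ^ (n (Fin.last m)))
        * Real.exp (-lam * A^2) < 1) :
    ∃ ε : ((j : Fin (m+1)) → Fin (n j)) → Bool,
      ∀ y : (j : Fin m) → (Fin (n j.castSucc) → ℝ), (∀ j, y j ∈ Y j) → en (V ε y) ≤ A := by
  classical
  by_contra hno
  push_neg at hno
  -- counting
  set NN : ℕ := Fintype.card ((j : Fin (m+1)) → Fin (n j)) with hNN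
  have hcardsplit : Fintype.card ((j : Fin m) → Fin (n j.castSucc)) * Fintype.card (Fin (n (Fin.last m))) = NN := by
    rw [hNN, ← Fintype.card_of_bijective (snoc_bijective (m := m) (n := n)), Fintype.card_prod]
  have key : ∀ ε : ((j : Fin (m+1)) → Fin (n j)) → Bool, (1:ℝ) ≤ ∑ y ∈ Fintype.piFinset Y,
      Real.exp (lam * (∑ c, (V ε y c)^2)) * Real.exp (-lam * A^2) := by
    intro ε
    obtain ⟨y₀, hy₀mem, hy₀⟩ := hno ε
    have hy₀' : y₀ ∈ Fintype.piFinset Y := by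
      rw [Fintype.mem_piFinset]; exact hy₀mem
    have hterm : (1:ℝ) ≤ Real.exp (lam * (∑ c, (V ε y₀ c)^2)) * Real.exp (-lam * A^2) := by
      rw [← Real.exp_add]
      rw [show lam * (∑ c, (V ε y₀ c)^2) + (-lam * A^2) = lam * ((∑ c, (V ε y₀ c)^2) - A^2) by ring]
      apply Real.one_le_exp
      have h1 : A < en (V ε y₀) := hy₀
      have h2 : A^2 < ∑ c, (V ε y₀ c)^2 := by
        have h3 : (en (V ε y₀))^2 = ∑ c, (V ε y₀ c)^2 := Real.sq_sqrt (by positivity)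
        nlinarith [en_nonneg (V ε y₀)]
      nlinarith
    calc (1:ℝ) ≤ Real.exp (lam * (∑ c, (V ε y₀ c)^2)) * Real.exp (-lam * A^2) := hterm
      _ ≤ ∑ y ∈ Fintype.piFinset Y,
          Real.exp (lam * (∑ c, (V ε y c)^2)) * Real.exp (-lam * A^2) := by
          apply Finset.single_le_sum (f := fun y =>
            Real.exp (lam * (∑ c, (V ε y c)^2)) * Real.exp (-lam * A^2)) _ hy₀'
          intro y _
          positivity
  -- per-y bound
  have peryt : ∀ y : (j : Fin m) → (Fin (n j.castSucc) → ℝ), (∀ j, y j ∈ Y j) →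
      ∑ ε : ((j : Fin (m+1)) → Fin (n j)) → Bool, Real.exp (lam * (∑ c, (V ε y c)^2))
        ≤ (2:ℝ) ^ NN * ((1 - 2*lam)⁻¹ ^ (n (Fin.last m))) := by
    intro y hy
    set a : ((j : Fin m) → Fin (n j.castSucc)) → ℝ := fun g => ∏ j, y j (g j) with ha
    have hca : ∑ g, (a g)^2 ≤ 1 := sq_sum_prod_le_one y (fun j => hYball j _ (hy j))
    have hca0 : 0 ≤ ∑ g, (a g)^2 := by positivity
    have hc1 : 2 * lam * (∑ g, (a g)^2) < 1 := by nlinarith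
    have hstep1 : ∀ ε : ((j : Fin (m+1)) → Fin (n j)) → Bool, Real.exp (lam * (∑ c, (V ε y c)^2))
        = ∏ c, Real.exp (lam * (V ε y c)^2) := by
      intro ε
      rw [Finset.mul_sum]
      exact Real.exp_sum _ _
    have hstep2 : ∑ ε : ((j : Fin (m+1)) → Fin (n j)) → Bool, ∏ c, Real.exp (lam * (V ε y c)^2)
        = ∏ c : Fin (n (Fin.last m)), ∑ ρ : ((j : Fin m) → Fin (n j.castSucc)) → Bool, Real.exp (lam * (∑ g, a g * sgn (ρ g))^2) := by
      have := eps_factorize (n := n) (fun c ρ => Real.exp (lam * (∑ g : (j : Fin m) → Fin (n j.castSucc), a g * sgn (ρ g))^2))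
      rw [← this]
      apply Finset.sum_congr rfl
      intro ε _
      apply Finset.prod_congr rfl
      intro c _
      have hVc : V ε y c = ∑ g : (j : Fin m) → Fin (n j.castSucc), a g * sgn (ε (Fin.snoc g c)) := by
        rw [V]
        apply Finset.sum_congr rfl
        intro g _
        rw [ha]
        ring
      rw [hVc]
    have hstep3 :
        ∑ ρ : ((j : Fin m) → Fin (n j.castSucc)) → Bool, Real.exp (lam * (∑ g, a g * sgn (ρ g))^2)
          ≤ 2 ^ (Fintype.card ((j : Fin m) → Fin (n j.castSucc))) * (1 - 2*lam)⁻¹ := by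
      calc ∑ ρ : ((j : Fin m) → Fin (n j.castSucc)) → Bool, Real.exp (lam * (∑ g, a g * sgn (ρ g))^2)
          ≤ 2 ^ (Fintype.card ((j : Fin m) → Fin (n j.castSucc))) * (1 - 2 * lam * (∑ g, (a g)^2))⁻¹ :=
            mgf_bound a lam hl.le hc1
        _ ≤ 2 ^ (Fintype.card ((j : Fin m) → Fin (n j.castSucc))) * (1 - 2*lam)⁻¹ := by
            apply mul_le_mul_of_nonneg_left _ (by positivity)
            apply inv_anti₀ (by linarith)
            nlinarith
    calc ∑ ε : ((j : Fin (m+1)) → Fin (n j)) → Bool, Real.exp (lam * (∑ c, (V ε y c)^2))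
        = ∏ c : Fin (n (Fin.last m)), ∑ ρ : ((j : Fin m) → Fin (n j.castSucc)) → Bool, Real.exp (lam * (∑ g, a g * sgn (ρ g))^2) := by
          rw [← hstep2]
          exact Finset.sum_congr rfl (fun ε _ => hstep1 ε)
      _ ≤ ∏ (_c : Fin (n (Fin.last m))), ((2:ℝ) ^ (Fintype.card ((j : Fin m) → Fin (n j.castSucc))) * (1 - 2*lam)⁻¹) := by
          apply Finset.prod_le_prod
          · intro c _
            apply Finset.sum_nonneg
            intro ρ _
            positivity
          · intro c _; exact hstep3
      _ = ((2:ℝ) ^ (Fintype.card ((j : Fin m) → Fin (n j.castSucc))) * (1 - 2*lam)⁻¹) ^ (n (Fin.last m)) := by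
          rw [Finset.prod_const, Finset.card_univ, Fintype.card_fin]
      _ = (2:ℝ) ^ NN * ((1 - 2*lam)⁻¹ ^ (n (Fin.last m))) := by
          rw [mul_pow, ← pow_mul, ← hcardsplit, Fintype.card_fin]
  -- combine
  have hmain : (2:ℝ)^NN ≤ (∏ j, ((Y j).card : ℝ)) * ((1 - 2*lam)⁻¹ ^ (n (Fin.last m)))
      * Real.exp (-lam * A^2) * 2^NN := by
    have hcard2 : ((2:ℝ))^NN = ∑ ε : ((j : Fin (m+1)) → Fin (n j)) → Bool, (1:ℝ) := by
      rw [Finset.sum_const, Finset.card_univ, Fintype.card_fun, Fintype.card_bool, nsmul_eq_mul,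
        mul_one]
      norm_cast
    calc (2:ℝ)^NN = ∑ ε : ((j : Fin (m+1)) → Fin (n j)) → Bool, (1:ℝ) := hcard2
      _ ≤ ∑ ε : ((j : Fin (m+1)) → Fin (n j)) → Bool, ∑ y ∈ Fintype.piFinset Y,
            Real.exp (lam * (∑ c, (V ε y c)^2)) * Real.exp (-lam * A^2) :=
          Finset.sum_le_sum (fun ε _ => key ε)
      _ = ∑ y ∈ Fintype.piFinset Y, (∑ ε : ((j : Fin (m+1)) → Fin (n j)) → Bool,
            Real.exp (lam * (∑ c, (V ε y c)^2))) * Real.exp (-lam * A^2) := by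
          rw [Finset.sum_comm]
          apply Finset.sum_congr rfl
          intro y _
          rw [Finset.sum_mul]
      _ ≤ ∑ y ∈ Fintype.piFinset Y, ((2:ℝ) ^ NN * ((1 - 2*lam)⁻¹ ^ (n (Fin.last m))))
            * Real.exp (-lam * A^2) := by
          apply Finset.sum_le_sum
          intro y hy
          apply mul_le_mul_of_nonneg_right _ (Real.exp_nonneg _)
          exact peryt y (Fintype.mem_piFinset.1 hy)
      _ = (∏ j, ((Y j).card : ℝ)) * ((1 - 2*lam)⁻¹ ^ (n (Fin.last m)))
            * Real.exp (-lam * A^2) * 2^NN := by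
          rw [Finset.sum_const, Fintype.card_piFinset, nsmul_eq_mul]
          push_cast
          ring
  have hpos : (0:ℝ) < 2^NN := by positivity
  nlinarith [hmain, hcount, hpos]

lemma exp_three_ge : (20.085 : ℝ) ≤ Real.exp 3 := by
  have h1 : Real.exp 3 = Real.exp 1 * Real.exp 1 * Real.exp 1 := by
    rw [← Real.exp_add, ← Real.exp_add]
    norm_num
  have h2 := Real.exp_one_gt_d9.le
  rw [h1]
  nlinarith [Real.exp_pos 1]

lemma log_le_main (z : ℝ) (hz : 0 < z) : Real.log z ≤ z / 20 + 2 := by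
  have h1 : Real.log (z * Real.exp (-3)) ≤ z * Real.exp (-3) - 1 :=
    Real.log_le_sub_one_of_pos (by positivity)
  rw [Real.log_mul (ne_of_gt hz) (by positivity), Real.log_exp] at h1
  have h2 : Real.exp (-3) ≤ 1/20 := by
    rw [Real.exp_neg]
    rw [inv_le_comm₀ (Real.exp_pos 3) (by norm_num)]
    calc (1/20 : ℝ)⁻¹ = 20 := by norm_num
      _ ≤ 20.085 := by norm_num
      _ ≤ Real.exp 3 := exp_three_ge
  nlinarith [Real.exp_pos (-3)]

lemma log_ten_le : Real.log 10 ≤ 2.35 := by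
  rw [Real.log_le_iff_le_exp (by norm_num)]
  have h := Real.sum_le_exp_of_nonneg (x := 2.35) (by norm_num) 6
  calc (10:ℝ) ≤ ∑ i ∈ range 6, (2.35:ℝ)^i / i.factorial := by
        simp [Finset.sum_range_succ, Nat.factorial]
        norm_num
    _ ≤ Real.exp 2.35 := h

lemma log_fortythree_le : Real.log 43 ≤ 3.77 := by
  rw [Real.log_le_iff_le_exp (by norm_num)]
  have hsplit : Real.exp (3.77 : ℝ) = Real.exp 3 * Real.exp 0.77 := by
    rw [← Real.exp_add]; norm_num
  have h077 : (2.1425 : ℝ) ≤ Real.exp 0.77 := by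
    have h := Real.sum_le_exp_of_nonneg (x := 0.77) (by norm_num) 4
    calc (2.1425 : ℝ) ≤ ∑ i ∈ range 4, (0.77:ℝ)^i / i.factorial := by
          simp [Finset.sum_range_succ, Nat.factorial]
          norm_num
      _ ≤ Real.exp 0.77 := h
  rw [hsplit]
  nlinarith [exp_three_ge, Real.exp_pos 3, Real.exp_pos (0.77:ℝ)]

/-- The master numeric inequality. `d = m+1 ≥ 3`. -/
lemma numeric_master (d : ℕ) (hd : 3 ≤ d) :
    ((d:ℝ) - 1) * Real.log (14*d+1) + Real.log 10
      < (9/20) * ((6*(d:ℝ)+1)/(7*d))^2 * d^3 := by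
  have hd0 : (0:ℝ) < d := by positivity
  rcases eq_or_lt_of_le hd with h3 | h4
  · -- d = 3
    subst h3
    push_cast
    have h43 : Real.log (14*(3:ℝ)+1) = Real.log 43 := by norm_num
    rw [h43]
    have := log_fortythree_le
    have := log_ten_le
    nlinarith
  · -- d ≥ 4
    have hd4 : (4:ℝ) ≤ d := by exact_mod_cast h4
    have hlog : Real.log (14*(d:ℝ)+1) ≤ (14*(d:ℝ)+1)/20 + 2 :=
      log_le_main _ (by positivity)
    have hfrac : (6/7 : ℝ) ≤ (6*(d:ℝ)+1)/(7*d) := by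
      rw [le_div_iff₀ (by positivity)]
      nlinarith
    have hfrac2 : (6/7:ℝ)^2 ≤ ((6*(d:ℝ)+1)/(7*d))^2 := by
      apply pow_le_pow_left₀ (by norm_num) hfrac
    have hrhs : (9/20) * (6/7:ℝ)^2 * (d:ℝ)^3 ≤ (9/20) * ((6*(d:ℝ)+1)/(7*d))^2 * d^3 := by
      apply mul_le_mul_of_nonneg_right _ (by positivity)
      apply mul_le_mul_of_nonneg_left hfrac2 (by norm_num)
    have hlt : ((d:ℝ) - 1) * ((14*(d:ℝ)+1)/20 + 2) + 2.35 < (9/20) * (6/7:ℝ)^2 * (d:ℝ)^3 := by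
      nlinarith [hd4, sq_nonneg ((d:ℝ) - 4)]
    have hl1 : ((d:ℝ) - 1) * Real.log (14*d+1) ≤ ((d:ℝ) - 1) * ((14*(d:ℝ)+1)/20 + 2) := by
      apply mul_le_mul_of_nonneg_left hlog (by linarith)
    calc ((d:ℝ) - 1) * Real.log (14*d+1) + Real.log 10
        ≤ ((d:ℝ) - 1) * ((14*(d:ℝ)+1)/20 + 2) + 2.35 := by
          have := log_ten_le; linarith
      _ < (9/20) * (6/7:ℝ)^2 * (d:ℝ)^3 := hlt
      _ ≤ (9/20) * ((6*(d:ℝ)+1)/(7*d))^2 * d^3 := hrhs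

lemma en_le_one_iff {N : ℕ} (u : Fin N → ℝ) : en u ≤ 1 ↔ ∑ i, u i ^ 2 ≤ 1 := by
  rw [en]
  constructor
  · intro h
    have h2 : Real.sqrt (∑ i, u i ^2) ^ 2 ≤ 1 := by nlinarith [Real.sqrt_nonneg (∑ i, u i ^2)]
    rwa [Real.sq_sqrt (by positivity)] at h2
  · intro h
    calc Real.sqrt (∑ i, u i ^2) ≤ Real.sqrt 1 := Real.sqrt_le_sqrt h
      _ = 1 := Real.sqrt_one

/-- plain-function version of the net lemma -/
lemma net_exists' (k : ℕ) {θ : ℝ} (hθ : 0 < θ) :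
    ∃ Y : Finset (Fin k → ℝ),
      (∀ y ∈ Y, ∑ v, (y v)^2 ≤ 1) ∧ ((Y.card : ℝ) ≤ (1 + 2/θ)^k) ∧
      (∀ x : Fin k → ℝ, ∑ v, (x v)^2 ≤ 1 → ∃ y ∈ Y, en (fun v => x v - y v) ≤ θ) := by
  obtain ⟨YE, hball, hcard, hcover⟩ := net_exists k hθ
  refine ⟨YE.map (WithLp.equiv 2 (Fin k → ℝ)).toEmbedding, ?_, ?_, ?_⟩
  · intro y hy
    obtain ⟨yE, hyE, rfl⟩ := Finset.mem_map.1 hy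
    have h1 : en ((WithLp.equiv 2 (Fin k → ℝ)) yE) ≤ 1 := by
      rw [en_eq_norm]
      simpa using hball yE hyE
    exact (en_le_one_iff _).1 h1
  · rw [Finset.card_map]; exact hcard
  · intro x hx
    have hx' : ‖(WithLp.equiv 2 (Fin k → ℝ)).symm x‖ ≤ 1 := by
      rw [← en_eq_norm]; exact (en_le_one_iff _).2 hx
    obtain ⟨yE, hyE, hclose⟩ := hcover _ hx'
    refine ⟨(WithLp.equiv 2 (Fin k → ℝ)) yE, Finset.mem_map_of_mem _ hyE, ?_⟩
    rw [en_eq_norm]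
    have : (WithLp.equiv 2 (Fin k → ℝ)).symm
        (fun v => x v - ((WithLp.equiv 2 (Fin k → ℝ)) yE) v)
        = (WithLp.equiv 2 (Fin k → ℝ)).symm x - yE := rfl
    rw [this]
    exact hclose

lemma rpow_neg_three_halves {D : ℝ} (hD : 0 < D) :
    D ^ (-(3:ℝ)/2) = (Real.sqrt (D^3))⁻¹ := by
  have h1 : (-(3:ℝ)/2) = -((3:ℝ)/2) := by norm_num
  rw [h1, Real.rpow_neg hD.le]
  congr 1
  have h2 : ((3:ℝ)/2) = (3:ℕ) * (1/2 : ℝ) := by norm_num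
  rw [h2, Real.rpow_mul hD.le, Real.rpow_natCast, Real.sqrt_eq_rpow]

lemma prob_case (hm : 2 ≤ m) (hmono : Monotone n) (hpos : ∀ j, 0 < n j) :
    ∃ ε : ((j : Fin (m+1)) → Fin (n j)) → Bool,
      ∀ x : (j : Fin (m+1)) → (Fin (n j) → ℝ), (∀ j, ∑ v, (x j v)^2 ≤ 1) →
        |∑ f, sgn (ε f) * ∏ j, x j (f j)|
          ≤ Real.sqrt (((m:ℝ)+1)^3 * n (Fin.last m)) := by
  classical
  set D : ℝ := (m:ℝ) + 1 with hD
  have hDpos : 0 < D := by positivity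
  set θ : ℝ := 1/(7*D) with hθdef
  have hθpos : 0 < θ := by rw [hθdef]; positivity
  set lam : ℝ := 9/20 with hlam
  set B : ℝ := Real.sqrt (D^3 * n (Fin.last m)) with hB
  have hBnn : 0 ≤ B := Real.sqrt_nonneg _
  have hmθ : (m:ℝ) * θ < 1 := by
    rw [hθdef, hD]
    rw [mul_one_div, div_lt_one (by positivity)]
    nlinarith [Nat.cast_nonneg (α := ℝ) m]
  have h1mθ : 1 - (m:ℝ)*θ = (6*D+1)/(7*D) := by
    rw [hθdef, hD]
    field_simp
    ring
  have h1mθpos : 0 < 1 - (m:ℝ)*θ := by rw [h1mθ]; positivity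
  set A : ℝ := (1 - (m:ℝ)*θ) * B with hA
  have hA0 : 0 ≤ A := by positivity
  -- build nets
  have hnets : ∀ j : Fin m, ∃ Y : Finset (Fin (n j.castSucc) → ℝ),
      (∀ y ∈ Y, ∑ v, (y v)^2 ≤ 1) ∧ ((Y.card : ℝ) ≤ (1 + 2/θ)^(n j.castSucc)) ∧
      (∀ x : Fin (n j.castSucc) → ℝ, ∑ v, (x v)^2 ≤ 1 →
        ∃ y ∈ Y, en (fun v => x v - y v) ≤ θ) := fun j => net_exists' _ hθpos
  choose Y hYball hYcard hYnet using hnets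
  -- the counting hypothesis
  have hcount : (∏ j, ((Y j).card : ℝ)) * ((1 - 2*lam)⁻¹ ^ (n (Fin.last m)))
      * Real.exp (-lam * A^2) < 1 := by
    have hlog14 : (0:ℝ) ≤ Real.log (14*D+1) := by
      apply Real.log_nonneg; nlinarith
    have h2θ : 1 + 2/θ = 14*D+1 := by
      rw [hθdef]
      field_simp
      ring
    have hKle : (∏ j, ((Y j).card : ℝ)) ≤ Real.exp ((∑ j : Fin m, (n j.castSucc : ℝ)) * Real.log (14*D+1)) := by
      calc (∏ j, ((Y j).card : ℝ)) ≤ ∏ j : Fin m, (14*D+1)^(n j.castSucc) := by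
            apply Finset.prod_le_prod (fun j _ => Nat.cast_nonneg _)
            intro j _
            rw [← h2θ]
            exact hYcard j
        _ = Real.exp ((∑ j : Fin m, (n j.castSucc : ℝ)) * Real.log (14*D+1)) := by
            rw [Finset.sum_mul, Real.exp_sum]
            apply Finset.prod_congr rfl
            intro j _
            conv_lhs => rw [← Real.exp_log (show (0:ℝ) < 14*D+1 by nlinarith)]
            rw [← Real.exp_nat_mul]
    have hinv : ((1 - 2*lam)⁻¹ : ℝ) = 10 := by rw [hlam]; norm_num
    have h10 : ((1 - 2*lam)⁻¹ ^ (n (Fin.last m)) : ℝ)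
        = Real.exp ((n (Fin.last m) : ℝ) * Real.log 10) := by
      rw [hinv]
      conv_lhs => rw [← Real.exp_log (show (0:ℝ) < 10 by norm_num)]
      rw [← Real.exp_nat_mul]
    have hA2 : A^2 = (1 - (m:ℝ)*θ)^2 * (D^3 * n (Fin.last m)) := by
      rw [hA, mul_pow, hB, Real.sq_sqrt (by positivity)]
    -- sum of dims bound
    have hsum : (∑ j : Fin m, (n j.castSucc : ℝ)) ≤ (m:ℝ) * (n (Fin.last m) : ℝ) := by
      calc (∑ j : Fin m, (n j.castSucc : ℝ)) ≤ ∑ _j : Fin m, (n (Fin.last m) : ℝ) := by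
            apply Finset.sum_le_sum
            intro j _
            exact_mod_cast hmono (Fin.le_last j.castSucc)
        _ = (m:ℝ) * (n (Fin.last m) : ℝ) := by
            rw [Finset.sum_const, Finset.card_univ, Fintype.card_fin, nsmul_eq_mul]
    -- main numeric comparison
    have hnum := numeric_master (m+1) (by omega)
    have hDnat : ((m+1 : ℕ) : ℝ) = D := by rw [hD]; push_cast; ring
    rw [hDnat] at hnum
    have hnlast1 : (1:ℝ) ≤ (n (Fin.last m) : ℝ) := by exact_mod_cast hpos (Fin.last m)
    have hmain : (∑ j : Fin m, (n j.castSucc : ℝ)) * Real.log (14*D+1)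
        + (n (Fin.last m) : ℝ) * Real.log 10 < lam * A^2 := by
      have hstep : (∑ j : Fin m, (n j.castSucc : ℝ)) * Real.log (14*D+1)
          + (n (Fin.last m) : ℝ) * Real.log 10
          ≤ (n (Fin.last m) : ℝ) * (((m:ℝ)) * Real.log (14*D+1) + Real.log 10) := by
        have h1 : (∑ j : Fin m, (n j.castSucc : ℝ)) * Real.log (14*D+1)
            ≤ (m:ℝ) * (n (Fin.last m) : ℝ) * Real.log (14*D+1) :=
          mul_le_mul_of_nonneg_right hsum hlog14
        nlinarith
      have hDm : (D:ℝ) - 1 = (m:ℝ) := by rw [hD]; ring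
      have hnum' : ((m:ℝ)) * Real.log (14*D+1) + Real.log 10
          < (9/20) * ((6*D+1)/(7*D))^2 * D^3 := by
        rw [← hDm]; exact hnum
      have hlamA : lam * A^2 = (n (Fin.last m) : ℝ) * ((9/20) * ((6*D+1)/(7*D))^2 * D^3) := by
        rw [hA2, h1mθ, hlam]
        ring
      calc (∑ j : Fin m, (n j.castSucc : ℝ)) * Real.log (14*D+1)
            + (n (Fin.last m) : ℝ) * Real.log 10
          ≤ (n (Fin.last m) : ℝ) * (((m:ℝ)) * Real.log (14*D+1) + Real.log 10) := hstep
        _ < (n (Fin.last m) : ℝ) * ((9/20) * ((6*D+1)/(7*D))^2 * D^3) := by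
            apply mul_lt_mul_of_pos_left hnum' (by linarith)
        _ = lam * A^2 := hlamA.symm
    -- put together
    calc (∏ j, ((Y j).card : ℝ)) * ((1 - 2*lam)⁻¹ ^ (n (Fin.last m))) * Real.exp (-lam * A^2)
        ≤ Real.exp ((∑ j : Fin m, (n j.castSucc : ℝ)) * Real.log (14*D+1))
            * Real.exp ((n (Fin.last m) : ℝ) * Real.log 10) * Real.exp (-lam * A^2) := by
          apply mul_le_mul_of_nonneg_right _ (Real.exp_nonneg _)
          apply mul_le_mul hKle (le_of_eq h10) (by positivity) (Real.exp_nonneg _)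
      _ = Real.exp ((∑ j : Fin m, (n j.castSucc : ℝ)) * Real.log (14*D+1)
            + (n (Fin.last m) : ℝ) * Real.log 10 + (-lam * A^2)) := by
          rw [← Real.exp_add, ← Real.exp_add]
      _ < Real.exp 0 := by
          apply Real.exp_lt_exp.2
          linarith
      _ = 1 := Real.exp_zero
  obtain ⟨ε, hε⟩ := exists_good_eps lam A (by rw [hlam]; norm_num) (by rw [hlam]; norm_num)
    hA0 Y hYball hcount
  have hglobal := net_to_global ε hθpos hA0 hmθ Y hYball hYnet hε
  refine ⟨ε, ?_⟩
  intro x hx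
  rw [pair_decomp]
  have hVB : en (V ε (fun j => x j.castSucc)) ≤ B := by
    have h := hglobal (fun j => x j.castSucc) (fun j => hx j.castSucc)
    have hAB : A / (1 - (m:ℝ)*θ) = B := by
      rw [hA, mul_comm, mul_div_assoc, div_self (ne_of_gt h1mθpos), mul_one]
    rwa [hAB] at h
  calc |∑ c, x (Fin.last m) c * V ε (fun j => x j.castSucc) c|
      ≤ en (x (Fin.last m)) * en (V ε (fun j => x j.castSucc)) := cs_abs _ _
    _ ≤ 1 * B := by
        apply mul_le_mul (en_le_one (hx (Fin.last m))) hVB (en_nonneg _) (by norm_num)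
    _ = Real.sqrt (((m:ℝ)+1)^3 * n (Fin.last m)) := by rw [one_mul, hB, hD]


end Stmt14Aux

/-- The injective tensor norm of `T ∈ ℓ_2^{n_1} ⊗ ⋯ ⊗ ℓ_2^{n_d}`:
the supremum of `|⟨T, x_1 ⊗ ⋯ ⊗ x_d⟩|` over unit balls. -/
noncomputable def injNorm {d : ℕ} {n : Fin d → ℕ}
    (T : ((j : Fin d) → Fin (n j)) → ℝ) : ℝ :=
  sSup {r | ∃ x : (j : Fin d) → (Fin (n j) → ℝ),
    (∀ j, ∑ v, x j v ^ 2 ≤ 1) ∧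
    r = |∑ f : (j : Fin d) → Fin (n j), T f * ∏ j, x j (f j)|}


/-- For `n_1 ≤ ⋯ ≤ n_d` (here `d = m+1`), the natural identification
`Φ : ℓ_2^{n_1} ⊗_ε ⋯ ⊗_ε ℓ_2^{n_d} → ℓ_2^{n_1⋯n_d}` has norm at least
`d^{-3/2}(n_1⋯n_{d-1})^{1/2}`: some `T` with injective norm at most one has Euclidean
norm at least `d^{-3/2}(n_1⋯n_{d-1})^{1/2}`. -/
theorem stmt14 (m : ℕ) (n : Fin (m + 1) → ℕ) (hmono : Monotone n)
    (hpos : ∀ j, 0 < n j) :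
    ∃ T : ((j : Fin (m + 1)) → Fin (n j)) → ℝ, injNorm T ≤ 1 ∧
      ((m + 1 : ℝ)) ^ (-(3 : ℝ) / 2) * Real.sqrt (∏ j : Fin m, (n j.castSucc : ℝ)) ≤
        Real.sqrt (∑ f : (j : Fin (m + 1)) → Fin (n j), T f ^ 2) := by


  classical
  have hDpos : (0:ℝ) < (m:ℝ)+1 := by positivity
  have hrpow : ((m + 1 : ℝ)) ^ (-(3 : ℝ) / 2) = (Real.sqrt (((m:ℝ)+1)^3))⁻¹ := by
    rw [show ((m + 1 : ℝ)) = ((m:ℝ)+1) by push_cast; ring]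
    exact Stmt14Aux.rpow_neg_three_halves hDpos
  have hsqrtP : (0:ℝ) < Real.sqrt (((m:ℝ)+1)^3) := Real.sqrt_pos.2 (by positivity)
  have key : ∃ T : ((j : Fin (m + 1)) → Fin (n j)) → ℝ,
      (∀ x : (j : Fin (m+1)) → (Fin (n j) → ℝ), (∀ j, ∑ v, x j v ^ 2 ≤ 1) →
        |∑ f, T f * ∏ j, x j (f j)| ≤ 1) ∧
      ((m + 1 : ℝ)) ^ (-(3 : ℝ) / 2) * Real.sqrt (∏ j : Fin m, (n j.castSucc : ℝ)) ≤
        Real.sqrt (∑ f : (j : Fin (m + 1)) → Fin (n j), T f ^ 2) := by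
    by_cases hC0 : (∏ j : Fin m, (n j.castSucc : ℝ)) ≤ ((m:ℝ)+1)^3
    · -- single-indicator construction
      set f₀ : (j : Fin (m+1)) → Fin (n j) := fun j => ⟨0, hpos j⟩ with hf₀
      refine ⟨fun f => if f = f₀ then 1 else 0, ?_, ?_⟩
      · intro x hx
        have hsum : ∑ f, (if f = f₀ then (1:ℝ) else 0) * ∏ j, x j (f j)
            = ∏ j, x j (f₀ j) := by
          rw [show (∑ f, (if f = f₀ then (1:ℝ) else 0) * ∏ j, x j (f j))
              = ∑ f, (if f = f₀ then (∏ j, x j (f j)) else 0) from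
            Finset.sum_congr rfl (fun f _ => by split <;> simp)]
          rw [Finset.sum_ite_eq' Finset.univ f₀ (fun f => ∏ j, x j (f j))]
          simp
        rw [hsum, abs_prod]
        apply Finset.prod_le_one (fun j _ => abs_nonneg _)
        intro j _
        exact Stmt14Aux.abs_le_one_of_sq_sum (hx j) (f₀ j)
      · have hsum2 : ∑ f, (if f = f₀ then (1:ℝ) else 0)^2 = 1 := by
          rw [show (∑ f, (if f = f₀ then (1:ℝ) else 0)^2)
              = ∑ f, (if f = f₀ then (1:ℝ) else 0) from
            Finset.sum_congr rfl (fun f _ => by split <;> norm_num)]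
          rw [Finset.sum_ite_eq' Finset.univ f₀ (fun _ => (1:ℝ))]
          simp
        rw [hsum2, Real.sqrt_one, hrpow]
        have h1 : Real.sqrt (∏ j : Fin m, (n j.castSucc : ℝ)) ≤ Real.sqrt (((m:ℝ)+1)^3) :=
          Real.sqrt_le_sqrt hC0
        calc (Real.sqrt (((m:ℝ)+1)^3))⁻¹ * Real.sqrt (∏ j : Fin m, (n j.castSucc : ℝ))
            ≤ (Real.sqrt (((m:ℝ)+1)^3))⁻¹ * Real.sqrt (((m:ℝ)+1)^3) :=
              mul_le_mul_of_nonneg_left h1 (by positivity)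
          _ = 1 := inv_mul_cancel₀ (ne_of_gt hsqrtP)
    · by_cases hC1 : (∏ j : Fin m, (n j.castSucc : ℝ)) ≤ ((m:ℝ)+1)^3 * (n 0)
      · -- diagonal construction, m ≥ 1
        have hm1 : 0 < m := by
          by_contra hm0
          push_neg at hm0
          interval_cases m
          · apply hC0
            push_cast
            simp
        have hle : ∀ j : Fin (m+1), n 0 ≤ n j := fun j => hmono (Fin.zero_le j)
        set F : Fin (n 0) → ((j : Fin (m+1)) → Fin (n j)) :=
          fun a j => Fin.castLE (hle j) a with hF
        have hF0 : ∀ a, F a 0 = a := fun a => Fin.ext rfl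
        have hsumlemma : ∀ G : ((j : Fin (m+1)) → Fin (n j)) → ℝ,
            ∑ f, (if f = F (f 0) then (1:ℝ) else 0) * G f = ∑ a : Fin (n 0), G (F a) := by
          intro G
          rw [show (∑ f, (if f = F (f 0) then (1:ℝ) else 0) * G f)
              = ∑ f, (if f = F (f 0) then G f else 0) from
            Finset.sum_congr rfl (fun f _ => by split <;> simp)]
          rw [← Finset.sum_filter]
          refine Finset.sum_nbij' (i := fun f => f 0) (j := fun a => F a) ?_ ?_ ?_ ?_ ?_
          · intro f _; exact Finset.mem_univ _
          · intro a _
            simp only [Finset.mem_filter, Finset.mem_univ, true_and]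
            rw [hF0]
          · intro f hf
            simp only [Finset.mem_filter, Finset.mem_univ, true_and] at hf
            exact hf.symm
          · intro a _
            exact hF0 a
          · intro f hf
            simp only [Finset.mem_filter, Finset.mem_univ, true_and] at hf
            rw [← hf]
        refine ⟨fun f => if f = F (f 0) then 1 else 0, ?_, ?_⟩
        · intro x hx
          rw [hsumlemma (fun f => ∏ j, x j (f j))]
          have hexp : ∀ a : Fin (n 0), ∏ j, x j (F a j)
              = x 0 a * ∏ i : Fin m, x i.succ (F a i.succ) := by
            intro a
            rw [Fin.prod_univ_succ, hF0]
          simp only [hexp]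
          set P : Fin (n 0) → ℝ := fun a => ∏ i : Fin m, x i.succ (F a i.succ) with hP
          have hcs := Stmt14Aux.cs_abs (fun a => x 0 a) P
          have henx : Stmt14Aux.en (fun a => x 0 a) ≤ 1 := Stmt14Aux.en_le_one (hx 0)
          set i₀ : Fin m := ⟨0, hm1⟩ with hi₀
          set j₁ : Fin (m+1) := i₀.succ with hj₁
          have henP : Stmt14Aux.en P ≤ 1 := by
            apply Stmt14Aux.en_le_one
            have hPbound : ∀ a, P a ^ 2 ≤ (x j₁ (F a j₁))^2 := by
              intro a
              rw [hP]
              rw [← Finset.prod_pow]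
              rw [← Finset.mul_prod_erase Finset.univ _ (Finset.mem_univ i₀)]
              have h2 : ∏ i ∈ Finset.univ.erase i₀, (x i.succ (F a i.succ))^2 ≤ 1 := by
                apply Finset.prod_le_one (fun i _ => sq_nonneg _)
                intro i _
                have h3 := Stmt14Aux.abs_le_one_of_sq_sum (hx i.succ) (F a i.succ)
                nlinarith [abs_nonneg (x i.succ (F a i.succ)), sq_abs (x i.succ (F a i.succ))]
              have h4 : (0:ℝ) ≤ (x j₁ (F a j₁))^2 := sq_nonneg _
              have h5 : (0:ℝ) ≤ ∏ i ∈ Finset.univ.erase i₀, (x i.succ (F a i.succ))^2 :=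
                Finset.prod_nonneg (fun i _ => sq_nonneg _)
              nlinarith
            calc ∑ a, P a ^2 ≤ ∑ a, (x j₁ (F a j₁))^2 := Finset.sum_le_sum (fun a _ => hPbound a)
              _ = ∑ v ∈ Finset.univ.image (fun a => F a j₁), (x j₁ v)^2 := by
                  rw [Finset.sum_image]
                  intro a _ b _ hab
                  have : (F a j₁ : ℕ) = (F b j₁ : ℕ) := congrArg Fin.val hab
                  exact Fin.ext this
              _ ≤ ∑ v, (x j₁ v)^2 := by
                  apply Finset.sum_le_sum_of_subset_of_nonneg (Finset.subset_univ _)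
                  intro v _ _
                  exact sq_nonneg _
              _ ≤ 1 := hx j₁
          calc |∑ a, x 0 a * P a| ≤ Stmt14Aux.en (fun a => x 0 a) * Stmt14Aux.en P := hcs
            _ ≤ 1 * 1 := mul_le_mul henx henP (Stmt14Aux.en_nonneg _) (by norm_num)
            _ = 1 := by norm_num
        · have hsum2 : ∑ f, (if f = F (f 0) then (1:ℝ) else 0)^2 = (n 0 : ℝ) := by
            rw [show (∑ f, (if f = F (f 0) then (1:ℝ) else 0)^2)
                = ∑ f, (if f = F (f 0) then (1:ℝ) else 0) * 1 from
              Finset.sum_congr rfl (fun f _ => by split <;> norm_num)]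
            rw [hsumlemma (fun _ => (1:ℝ))]
            simp
          rw [hsum2, hrpow]
          have h1 : Real.sqrt (∏ j : Fin m, (n j.castSucc : ℝ))
              ≤ Real.sqrt (((m:ℝ)+1)^3) * Real.sqrt (n 0) := by
            rw [← Real.sqrt_mul (by positivity)]
            exact Real.sqrt_le_sqrt hC1
          calc (Real.sqrt (((m:ℝ)+1)^3))⁻¹ * Real.sqrt (∏ j : Fin m, (n j.castSucc : ℝ))
              ≤ (Real.sqrt (((m:ℝ)+1)^3))⁻¹ * (Real.sqrt (((m:ℝ)+1)^3) * Real.sqrt (n 0)) :=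
                mul_le_mul_of_nonneg_left h1 (by positivity)
            _ = Real.sqrt (n 0) := by
                rw [← mul_assoc, inv_mul_cancel₀ (ne_of_gt hsqrtP), one_mul]
      · -- probabilistic construction, m ≥ 2
        have hm2 : 2 ≤ m := by
          by_contra hm1
          push_neg at hm1
          interval_cases m
          · apply hC0
            push_cast
            simp
          · apply hC1
            have heq : (∏ j : Fin 1, (n j.castSucc : ℝ)) = (n 0 : ℝ) := by
              simp [Fin.prod_univ_one]
            rw [heq]
            push_cast
            nlinarith [Nat.cast_nonneg (α := ℝ) (n 0)]
        obtain ⟨ε, hε⟩ := Stmt14Aux.prob_case hm2 hmono hpos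
        set B : ℝ := Real.sqrt (((m:ℝ)+1)^3 * n (Fin.last m)) with hB
        have hnlast : (0:ℝ) < n (Fin.last m) := by exact_mod_cast hpos _
        have hBpos : 0 < B := Real.sqrt_pos.2 (by positivity)
        refine ⟨fun f => Stmt14Aux.sgn (ε f) / B, ?_, ?_⟩
        · intro x hx
          have h1 : ∑ f, Stmt14Aux.sgn (ε f) / B * ∏ j, x j (f j)
              = (∑ f, Stmt14Aux.sgn (ε f) * ∏ j, x j (f j)) / B := by
            rw [Finset.sum_div]
            apply Finset.sum_congr rfl
            intro f _
            ring
          rw [h1, abs_div, abs_of_pos hBpos, div_le_one hBpos]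
          exact hε x hx
        · have h2 : ∑ f, (Stmt14Aux.sgn (ε f) / B)^2
              = (Fintype.card ((j : Fin (m+1)) → Fin (n j)) : ℝ) / B^2 := by
            rw [show (∑ f, (Stmt14Aux.sgn (ε f) / B)^2) = ∑ f : (j : Fin (m+1)) → Fin (n j), 1 / B^2 from
              Finset.sum_congr rfl (fun f _ => by rw [div_pow, Stmt14Aux.sgn_sq])]
            rw [Finset.sum_const, Finset.card_univ, nsmul_eq_mul]
            ring
          rw [h2]
          have hcard : (Fintype.card ((j : Fin (m+1)) → Fin (n j)) : ℝ)
              = (∏ j : Fin m, (n j.castSucc : ℝ)) * (n (Fin.last m) : ℝ) := by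
            rw [Fintype.card_pi]
            push_cast
            rw [Fin.prod_univ_castSucc]
            simp
          rw [hcard]
          have hB2 : B^2 = ((m:ℝ)+1)^3 * (n (Fin.last m) : ℝ) := Real.sq_sqrt (by positivity)
          have hq : (∏ j : Fin m, (n j.castSucc : ℝ)) * (n (Fin.last m) : ℝ) / B^2
              = (∏ j : Fin m, (n j.castSucc : ℝ)) / (((m:ℝ)+1)^3) := by
            rw [hB2]
            rw [div_eq_div_iff (by positivity) (by positivity)]
            ring
          rw [hq, Real.sqrt_div (by positivity) , hrpow, inv_mul_eq_div]
  obtain ⟨T, h1, h2⟩ := key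
  refine ⟨T, ?_, h2⟩
  apply Real.sSup_le _ (by norm_num)
  rintro r ⟨x, hx, rfl⟩
  exact h1 x hx
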